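/- Let G_k=(V,E,k) be a strongly connected labeled simple digraph with |V| ≥ 2. Then the matrix M = −A_k diag(K_k) ∈ ℝ^{V×V} has positive diagonal entries, nonpositive off-diagonal entries, and all of its row sums and column sums are zero; in particular, M is both row and column diagonally dominant. -/

import Mathlib

open Matrix BigOperators Finset

variable {V : Type*}

/-- Directed reachability in the digraph with edge set `F`. -/
def dReach (F : Finset (V × V)) : V → V → Prop :=
  Relation.ReflTransGen fun a b => (a, b) ∈ F

/-- Reachability in the underlying undirected graph of the digraph with edge set `F`. -/
def uReach (F : Finset (V × V)) : V → V → Prop :=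
  Relation.ReflTransGen fun a b => (a, b) ∈ F ∨ (b, a) ∈ F

/-- A digraph is strongly connected if every vertex reaches every other vertex. -/
def StronglyConnected (F : Finset (V × V)) : Prop :=
  ∀ i j : V, dReach F i j

/-- A simple digraph has no self-loops. -/
def NoSelfLoops (F : Finset (V × V)) : Prop :=
  ∀ e ∈ F, e.1 ≠ e.2

/-- The edge set `F` contains a directed cycle. -/
def HasDirectedCycle (F : Finset (V × V)) : Prop :=
  ∃ v : V, Relation.TransGen (fun a b => (a, b) ∈ F) v v

/-- The Laplacian matrix `A_k` of the labeled digraph `(V, F, k)`: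
`(A_k)_{i,j} = k_{j→i}` if `(j→i) ∈ F`, `(A_k)_{i,i} = -∑_{(i→j)∈F} k_{i→j}`, and `0` otherwise. -/
noncomputable def digraphLaplacian [Fintype V] [DecidableEq V]
    (F : Finset (V × V)) (k : V × V → ℝ) : Matrix V V ℝ :=
  Matrix.of fun i j =>
    if i = j then -(∑ e ∈ F.filter (fun e => e.1 = i), k e)
    else if (j, i) ∈ F then k (j, i) else 0

/-- `T` is a directed spanning tree of the strongly connected digraph `E`, rooted at `i`
and directed towards the root: no directed cycle, and every vertex except `i`
is the source of exactly one edge. -/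
def IsSpanningTreeTo [DecidableEq V] (E : Finset (V × V)) (i : V)
    (T : Finset (V × V)) : Prop :=
  T ⊆ E ∧ ¬ HasDirectedCycle T ∧
    ∀ j : V, j ≠ i → (T.filter (fun e => e.1 = j)).card = 1

open scoped Classical in
/-- The tree constant `(K_k)_i = ∑_{T ∈ T_i} ∏_{(j→j')∈T} k_{j→j'}`. -/
noncomputable def treeConst [Fintype V] [DecidableEq V]
    (E : Finset (V × V)) (k : V × V → ℝ) (i : V) : ℝ :=
  ∑ T ∈ E.powerset.filter (fun T => IsSpanningTreeTo E i T), ∏ e ∈ T, k e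

/-- The incidence matrix of the digraph with edge set `F`: in the column of edge `(j→j')`,
entry `-1` in row `j`, entry `+1` in row `j'`, and `0` elsewhere. -/
noncomputable def incidence [DecidableEq V] (F : Finset (V × V)) :
    Matrix V {e : V × V // e ∈ F} ℝ :=
  Matrix.of fun i e =>
    (if (e : V × V).2 = i then (1 : ℝ) else 0) - (if (e : V × V).1 = i then (1 : ℝ) else 0)

section Aux
variable {V : Type*} [DecidableEq V]

/-- out-edges of `v` in `T` -/
abbrev outs (T : Finset (V × V)) (v : V) : Finset (V × V) := T.filter (fun e => e.1 = v)

/-- successor function -/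
noncomputable def nxt (T : Finset (V × V)) (v : V) : V :=
  if h : (outs T v).Nonempty then h.choose.2 else v

lemma nxt_mem {T : Finset (V × V)} {v : V} (h : (outs T v).Nonempty) :
    (v, nxt T v) ∈ T := by
  rw [nxt, dif_pos h]
  have hs := h.choose_spec
  rw [Finset.mem_filter] at hs
  have : (v, h.choose.2) = h.choose := Prod.ext hs.2.symm rfl
  rw [this]; exact hs.1

lemma nxt_eq {T : Finset (V × V)} {v w : V} (hc : (outs T v).card ≤ 1)
    (hw : (v, w) ∈ T) : nxt T v = w := by
  have hne : (outs T v).Nonempty := ⟨(v, w), by simp [hw]⟩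
  have h1 : (v, nxt T v) ∈ outs T v := by simp [nxt_mem hne]
  have h2 : (v, w) ∈ outs T v := by simp [hw]
  have := Finset.card_le_one.mp hc _ h1 _ h2
  exact congrArg Prod.snd this

lemma nxt_fixed {T : Finset (V × V)} {v : V} (h : outs T v = ∅) : nxt T v = v := by
  rw [nxt, dif_neg]; simp [h]

lemma chain_transGen {S : Finset (V × V)} (u : ℕ → V) :
    ∀ n, 0 < n → (∀ t < n, (u t, u (t + 1)) ∈ S) →
      Relation.TransGen (fun a b => (a, b) ∈ S) (u 0) (u n) := by
  intro n
  induction n with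
  | zero => omega
  | succ n ih =>
    intro _ h
    rcases Nat.eq_zero_or_pos n with hn | hn
    · subst hn; exact Relation.TransGen.single (h 0 (by omega))
    · exact (ih hn fun t ht => h t (by omega)).tail (h n (by omega))

lemma reflTransGen_iterate {S : Finset (V × V)} (h1 : ∀ v, (outs S v).card ≤ 1) {a b : V}
    (h : Relation.ReflTransGen (fun x y => (x, y) ∈ S) a b) : ∃ n, (nxt S)^[n] a = b := by
  induction h with
  | refl => exact ⟨0, rfl⟩
  | tail hab hbc ih =>
    obtain ⟨n, hn⟩ := ih
    exact ⟨n + 1, by rw [Function.iterate_succ_apply', hn, nxt_eq (h1 _) hbc]⟩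

lemma transGen_iterate {S : Finset (V × V)} (h1 : ∀ v, (outs S v).card ≤ 1) {a b : V}
    (h : Relation.TransGen (fun x y => (x, y) ∈ S) a b) :
    ∃ n, 0 < n ∧ (nxt S)^[n] a = b := by
  induction h with
  | single hxy => exact ⟨1, one_pos, by simp [nxt_eq (h1 _) hxy]⟩
  | tail hab hbc ih =>
    obtain ⟨n, hn, hit⟩ := ih
    exact ⟨n + 1, by omega, by rw [Function.iterate_succ_apply', hit, nxt_eq (h1 _) hbc]⟩

lemma exists_periodic [Fintype V] (f : V → V) (x : V) :
    ∃ a b, a < b ∧ f^[a] x = f^[b] x := by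
  obtain ⟨a, b, hne, h⟩ := Finite.exists_ne_map_eq_of_infinite (fun n : ℕ => f^[n] x)
  rcases hne.lt_or_gt with hab | hab
  · exact ⟨a, b, hab, h⟩
  · exact ⟨b, a, hab, h.symm⟩

lemma cycle_of_forall_out [Fintype V] {S : Finset (V × V)} (x : V)
    (h : ∀ v, (outs S v).Nonempty) : HasDirectedCycle S := by
  obtain ⟨a, b, hab, he⟩ := exists_periodic (nxt S) x
  refine ⟨(nxt S)^[a] x, ?_⟩
  have := chain_transGen (S := S) (fun t => (nxt S)^[t + a] x) (b - a) (by omega)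
    (fun t _ => by
      show ((nxt S)^[t + a] x, (nxt S)^[t + 1 + a] x) ∈ S
      have : (nxt S)^[t + 1 + a] x = nxt S ((nxt S)^[t + a] x) := by
        rw [show t + 1 + a = (t + a) + 1 by omega, Function.iterate_succ_apply']
      rw [this]
      exact nxt_mem (h _))
  simpa [Nat.sub_add_cancel hab.le, he.symm] using this

lemma root_outs_empty {E T : Finset (V × V)} [Fintype V] {i : V}
    (hT : IsSpanningTreeTo E i T) : outs T i = ∅ := by
  by_contra h
  refine hT.2.1 (cycle_of_forall_out i fun v => ?_)
  by_cases hv : v = i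
  · subst hv; exact Finset.nonempty_iff_ne_empty.mpr h
  · exact Finset.card_pos.mp (by rw [hT.2.2 v hv]; norm_num)

lemma periodic_hits_sink {S : Finset (V × V)} (h1 : ∀ v, (outs S v).card ≤ 1) {r w : V} {t : ℕ}
    (hr : outs S r = ∅) (hcyc : Relation.TransGen (fun a b => (a, b) ∈ S) w w)
    (ht : (nxt S)^[t] w = r) : False := by
  obtain ⟨n, hn, hfix⟩ := transGen_iterate h1 hcyc
  have hrfix : nxt S r = r := nxt_fixed hr
  have hstuck : ∀ d, (nxt S)^[d + t] w = r := fun d => by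
    rw [Function.iterate_add_apply, ht, Function.iterate_fixed hrfix]
  have hper : (nxt S)^[n * (t + 1)] w = w := by
    rw [Function.iterate_mul]
    exact Function.iterate_fixed hfix (t + 1)
  have hle : t ≤ n * (t + 1) := le_trans (Nat.le_succ t) (Nat.le_mul_of_pos_left (t + 1) hn)
  have hw : w = r := by
    have h2 := hstuck (n * (t + 1) - t)
    rw [Nat.sub_add_cancel hle, hper] at h2
    exact h2
  subst hw
  obtain ⟨c, hc, -⟩ := Relation.TransGen.head'_iff.mp hcyc
  have : (w, c) ∈ outs S w := by simp [hc]
  simp [hr] at this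

lemma no_cycle_of_sink {S : Finset (V × V)} {r : V} (h1 : ∀ v, (outs S v).card ≤ 1)
    (hr : outs S r = ∅) (hreach : ∀ v, dReach S v r) : ¬HasDirectedCycle S := by
  rintro ⟨w, hw⟩
  obtain ⟨t, ht⟩ := reflTransGen_iterate h1 (hreach w)
  exact periodic_hits_sink h1 hr hw ht

lemma dReach_mono {S S' : Finset (V × V)} (hsub : S ⊆ S') {a b : V} (h : dReach S a b) :
    dReach S' a b := Relation.ReflTransGen.mono (fun _ _ hxy => hsub hxy) _ _ h

lemma nxt_congr {T T' : Finset (V × V)} {v : V} (h : outs T v = outs T' v) :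
    nxt T v = nxt T' v := by simp only [nxt, h]

lemma outs_insert_ne {e : V × V} {T : Finset (V × V)} {v : V} (h : e.1 ≠ v) :
    outs (insert e T) v = outs T v := by
  show (insert e T).filter (fun x => x.1 = v) = T.filter (fun x => x.1 = v)
  rw [Finset.filter_insert, if_neg h]

lemma outs_erase_eq {e : V × V} {T : Finset (V × V)} {v : V} :
    outs (T.erase e) v = (outs T v).erase e := by
  show (T.erase e).filter (fun x => x.1 = v) = (T.filter (fun x => x.1 = v)).erase e
  rw [Finset.filter_erase]

lemma outs_erase_ne {e : V × V} {T : Finset (V × V)} {v : V} (h : e.1 ≠ v) :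
    outs (T.erase e) v = outs T v := by
  rw [outs_erase_eq, Finset.erase_eq_of_notMem]
  simp [h]

lemma outs_card_le_of_erase {e : V × V} {T : Finset (V × V)} {v : V} :
    (outs (T.erase e) v).card ≤ (outs T v).card := by
  rw [outs_erase_eq]
  exact Finset.card_le_card (Finset.erase_subset _ _)

lemma orbit_transfer {f g : V → V} {w : V} (hag : ∀ v, v ≠ w → g v = f v) :
    ∀ (t : ℕ) (v : V), f^[t] v = w → ∃ s, g^[s] v = w := by
  intro t
  induction t with
  | zero => exact fun v h => ⟨0, h⟩
  | succ t ih =>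
    intro v h
    by_cases hv : v = w
    · exact ⟨0, hv⟩
    · rw [Function.iterate_succ_apply] at h
      obtain ⟨s, hs⟩ := ih (f v) h
      exact ⟨s + 1, by rw [Function.iterate_succ_apply, hag v hv, hs]⟩

lemma orbit_push {f g : V → V} {j w : V} (hag : ∀ v, v ≠ j → g v = f v) (hj : g j = w) :
    ∀ (t : ℕ) (v : V), f^[t] v = j → ∃ s, g^[s] v = w := by
  intro t
  induction t with
  | zero => exact fun v h => ⟨1, by rw [Function.iterate_one, show v = j from h, hj]⟩
  | succ t ih =>
    intro v h
    by_cases hv : v = j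
    · exact ⟨1, by rw [Function.iterate_one, hv, hj]⟩
    · rw [Function.iterate_succ_apply] at h
      obtain ⟨s, hs⟩ := ih (f v) h
      exact ⟨s + 1, by rw [Function.iterate_succ_apply, hag v hv, hs]⟩

lemma iterate_dReach {S : Finset (V × V)} {r : V} (h1 : ∀ v, v ≠ r → (outs S v).Nonempty) :
    ∀ (t : ℕ) (v : V), (nxt S)^[t] v = r → dReach S v r := by
  intro t
  induction t with
  | zero => exact fun v h => show dReach S v r from (show v = r from h) ▸ Relation.ReflTransGen.refl
  | succ t ih =>
    intro v h
    by_cases hv : v = r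
    · exact hv ▸ Relation.ReflTransGen.refl
    · rw [Function.iterate_succ_apply] at h
      exact Relation.ReflTransGen.head (nxt_mem (h1 v hv)) (ih _ h)

lemma transGen_erase_or {S : Finset (V × V)} (e : V × V) {a b : V}
    (h : Relation.TransGen (fun x y => (x, y) ∈ S) a b) :
    Relation.TransGen (fun x y => (x, y) ∈ S.erase e) a b ∨
      (Relation.ReflTransGen (fun x y => (x, y) ∈ S) a e.1 ∧
        Relation.ReflTransGen (fun x y => (x, y) ∈ S) e.2 b) := by
  induction h with
  | @single c hac =>
    by_cases hce : (a, c) = e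
    · subst hce
      exact Or.inr ⟨Relation.ReflTransGen.refl, Relation.ReflTransGen.refl⟩
    · exact Or.inl (Relation.TransGen.single (Finset.mem_erase.mpr ⟨hce, hac⟩))
  | @tail c d hac hcd ih =>
    rcases ih with h1 | ⟨h2, h3⟩
    · by_cases hce : (c, d) = e
      · subst hce
        exact Or.inr ⟨(Relation.TransGen.mono (fun x y hxy => (Finset.mem_erase.mp hxy).2) _ _ h1).to_reflTransGen,
          Relation.ReflTransGen.refl⟩
      · exact Or.inl (h1.tail (Finset.mem_erase.mpr ⟨hce, hcd⟩))
    · exact Or.inr ⟨h2, h3.tail hcd⟩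

lemma cycle_of_orbit_out [Fintype V] {S : Finset (V × V)} (x : V)
    (h : ∀ t : ℕ, (outs S ((nxt S)^[t] x)).Nonempty) : HasDirectedCycle S := by
  obtain ⟨a, b, hab, he⟩ := exists_periodic (nxt S) x
  refine ⟨(nxt S)^[a] x, ?_⟩
  have := chain_transGen (S := S) (fun t => (nxt S)^[t + a] x) (b - a) (by omega)
    (fun t _ => by
      show ((nxt S)^[t + a] x, (nxt S)^[t + 1 + a] x) ∈ S
      have h2 : (nxt S)^[t + 1 + a] x = nxt S ((nxt S)^[t + a] x) := by
        rw [show t + 1 + a = (t + a) + 1 by omega, Function.iterate_succ_apply']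
      rw [h2]
      exact nxt_mem (h _))
  simpa [Nat.sub_add_cancel hab.le, he.symm] using this

lemma tree_orbit [Fintype V] {E T : Finset (V × V)} {i : V} (hT : IsSpanningTreeTo E i T) :
    ∀ v, ∃ t, (nxt T)^[t] v = i := by
  intro v
  by_contra hno
  push_neg at hno
  exact hT.2.1 (cycle_of_orbit_out v fun t =>
    Finset.card_pos.mp (by rw [hT.2.2 _ (hno t)]; norm_num))

/-- Any edge of a functional graph whose source is `v` is `(v, nxt _ v)`. -/
lemma eq_nxt_edge {S : Finset (V × V)} {e : V × V} (h1 : (outs S e.1).card ≤ 1) (he : e ∈ S) :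
    e = (e.1, nxt S e.1) := by
  have : (e.1, e.2) ∈ S := by rwa [Prod.mk.eta]
  rw [nxt_eq h1 this]

/-- uniqueness of the erasable edge into `i` -/
lemma erase_spec_unique [Fintype V] {H : Finset (V × V)} {i : V}
    (h1 : ∀ v, (outs H v).card = 1) {e₁ e₂ : V × V}
    (he₁ : e₁ ∈ H) (ht₁ : e₁.2 = i) (ha₁ : ¬HasDirectedCycle (H.erase e₁))
    (he₂ : e₂ ∈ H) (ht₂ : e₂.2 = i) (ha₂ : ¬HasDirectedCycle (H.erase e₂)) : e₁ = e₂ := by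
  have hle : ∀ v, (outs H v).card ≤ 1 := fun v => (h1 v).le
  have hne : ∀ v, (outs H v).Nonempty := fun v =>
    Finset.card_pos.mp (by rw [h1 v]; norm_num)
  obtain ⟨w, hw⟩ := cycle_of_orbit_out i (fun t => hne _)
  have hii : Relation.TransGen (fun a b => (a, b) ∈ H) i i := by
    rcases transGen_erase_or e₁ hw with hc | ⟨hL, hR⟩
    · exact absurd ⟨w, hc⟩ ha₁
    · have hIe : Relation.ReflTransGen (fun a b => (a, b) ∈ H) i e₁.1 :=
        Relation.ReflTransGen.trans (ht₁ ▸ hR) hL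
      exact Relation.TransGen.tail' hIe (by rw [show (e₁.1, i) = e₁ from by rw [← ht₁]]; exact he₁)
  obtain ⟨n, hn, hfn⟩ := transGen_iterate hle hii
  have hex : ∃ m, 0 < m ∧ (nxt H)^[m] i = i := ⟨n, hn, hfn⟩
  obtain ⟨hm, hfm⟩ := Nat.find_spec hex
  have hchain : ∀ t : ℕ, ((nxt H)^[t] i, (nxt H)^[t + 1] i) ∈ H := fun t => by
    rw [Function.iterate_succ_apply']; exact nxt_mem (hne _)
  have key : ∀ e : V × V, e ∈ H → e.2 = i → ¬HasDirectedCycle (H.erase e) →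
      e = ((nxt H)^[Nat.find hex - 1] i, i) := by
    intro e heH het hea
    by_cases hon : ∃ t < Nat.find hex, e = ((nxt H)^[t] i, (nxt H)^[t + 1] i)
    · obtain ⟨t, htm, rfl⟩ := hon
      have h2 : (nxt H)^[t + 1] i = i := het
      have hge := Nat.find_min' hex ⟨Nat.succ_pos t, h2⟩
      have ht' : t = Nat.find hex - 1 := by omega
      rw [h2, ht']
    · push_neg at hon
      exfalso
      apply hea
      refine ⟨i, ?_⟩
      have hcc := chain_transGen (S := H.erase e) (fun t => (nxt H)^[t] i) (Nat.find hex) hm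
        (fun t ht => Finset.mem_erase.mpr ⟨fun hc => hon t ht hc.symm, hchain t⟩)
      simpa [hfm] using hcc
  rw [key e₁ he₁ ht₁ ha₁, key e₂ he₂ ht₂ ha₂]

/-- existence of the erasable edge into `i` -/
lemma erase_spec_exists [Fintype V] {H : Finset (V × V)} {i : V}
    (h1 : ∀ v, (outs H v).card = 1)
    (horb : ∀ v, ∃ t, (nxt H)^[t] v = i) :
    ∃ e, e ∈ H ∧ e.2 = i ∧ ¬HasDirectedCycle (H.erase e) := by
  have hle : ∀ v, (outs H v).card ≤ 1 := fun v => (h1 v).le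
  have hne : ∀ v, (outs H v).Nonempty := fun v =>
    Finset.card_pos.mp (by rw [h1 v]; norm_num)
  have hchain : ∀ t : ℕ, ((nxt H)^[t] i, (nxt H)^[t + 1] i) ∈ H := fun t => by
    rw [Function.iterate_succ_apply']; exact nxt_mem (hne _)
  have hex : ∃ m, 0 < m ∧ (nxt H)^[m] i = i := by
    obtain ⟨t, ht⟩ := horb (nxt H i)
    exact ⟨t + 1, Nat.succ_pos t, by rw [Function.iterate_succ_apply, ht]⟩
  obtain ⟨hm, hfm⟩ := Nat.find_spec hex
  set m := Nat.find hex with hmdef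
  set j := (nxt H)^[m - 1] i with hjdef
  have hejH : (j, i) ∈ H := by
    have := hchain (m - 1)
    rwa [show m - 1 + 1 = m by omega, hfm] at this
  refine ⟨(j, i), hejH, rfl, ?_⟩
  rintro ⟨w, hw⟩
  have houtj : outs H j = {(j, i)} := by
    obtain ⟨a, ha⟩ := Finset.card_eq_one.mp (h1 j)
    have : (j, i) ∈ outs H j := by simp [hejH]
    rw [ha] at this ⊢
    rw [Finset.mem_singleton] at this
    rw [this]
  have houtj' : outs (H.erase (j, i)) j = ∅ := by
    rw [outs_erase_eq, houtj, Finset.erase_singleton]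
  have hg1 : ∀ v, (outs (H.erase (j, i)) v).card ≤ 1 := fun v =>
    le_trans outs_card_le_of_erase (hle v)
  have hagree : ∀ v, v ≠ j → nxt (H.erase (j, i)) v = nxt H v := fun v hv =>
    nxt_congr (outs_erase_ne (by simpa using fun h => hv h.symm))
  have hjorb : ∀ v, ∃ t, (nxt H)^[t] v = j := fun v => by
    obtain ⟨t0, ht0⟩ := horb v
    exact ⟨(m - 1) + t0, by rw [Function.iterate_add_apply, ht0, ← hjdef]⟩
  obtain ⟨t1, ht1⟩ := hjorb w
  obtain ⟨s, hs⟩ := orbit_transfer hagree t1 w ht1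
  exact periodic_hits_sink hg1 houtj' hw hs

/-- removing an erasable edge from a functional graph gives a spanning tree rooted at its source -/
lemma tree_of_erase [Fintype V] {E H : Finset (V × V)} {e : V × V} (hHE : H ⊆ E)
    (h1 : ∀ v, (outs H v).card = 1) (hac : ¬HasDirectedCycle (H.erase e)) :
    IsSpanningTreeTo E e.1 (H.erase e) := by
  refine ⟨fun x hx => hHE (Finset.mem_of_mem_erase hx), hac, fun v hv => ?_⟩
  show (outs (H.erase e) v).card = 1
  rw [outs_erase_ne (fun h => hv h.symm)]
  exact h1 v

lemma cross_edge {E : Finset (V × V)} {A : Finset V} {i : V} (hA : i ∈ A) :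
    ∀ w, dReach E w i → w ∉ A → ∃ e ∈ E, e.1 ∉ A ∧ e.2 ∈ A := by
  intro w hr
  induction hr using Relation.ReflTransGen.head_induction_on with
  | refl => exact fun h => absurd hA h
  | @head a c h' _ ih =>
    intro hw
    by_cases hc : c ∈ A
    · exact ⟨(a, c), h', hw, hc⟩
    · exact ih hc

lemma partial_tree [Fintype V] {E : Finset (V × V)} {i : V} (hsc : StronglyConnected E) :
    ∀ (m : ℕ) (A : Finset V), i ∈ A → Fintype.card V ≤ A.card + m →
      (∃ T, T ⊆ E ∧ (∀ v ∈ A, v ≠ i → (outs T v).card = 1) ∧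
        (∀ v, v ∉ A → outs T v = ∅) ∧ outs T i = ∅ ∧ (∀ v ∈ A, dReach T v i)) →
      ∃ T, IsSpanningTreeTo E i T := by
  intro m
  induction m with
  | zero =>
    intro A hiA hcard ⟨T, hTE, hout1, _, houti, hreach⟩
    have hAuniv : A = Finset.univ := by
      apply Finset.eq_univ_of_card
      have := Finset.card_le_univ A
      omega
    subst hAuniv
    refine ⟨T, hTE, ?_, fun v hv => hout1 v (Finset.mem_univ v) hv⟩
    refine no_cycle_of_sink (r := i) (fun v => ?_) houti (fun v => hreach v (Finset.mem_univ v))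
    by_cases hv : v = i
    · subst hv; rw [houti]; norm_num
    · rw [hout1 v (Finset.mem_univ v) hv]
  | succ m ih =>
    intro A hiA hcard ⟨T, hTE, hout1, hout0, houti, hreach⟩
    by_cases hA : A = Finset.univ
    · refine ih A hiA ?_ ⟨T, hTE, hout1, hout0, houti, hreach⟩
      subst hA
      rw [Finset.card_univ]
      omega
    · have : ∃ w, w ∉ A := by
        by_contra hno
        push_neg at hno
        exact hA (Finset.eq_univ_iff_forall.mpr hno)
      obtain ⟨w, hw⟩ := this
      obtain ⟨e, he, heA, he2⟩ := cross_edge hiA w (hsc w i) hw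
      refine ih (insert e.1 A) (Finset.mem_insert_of_mem hiA)
        (by rw [Finset.card_insert_of_notMem heA]; omega) ?_
      refine ⟨insert e T, Finset.insert_subset he hTE, ?_, ?_, ?_, ?_⟩
      · intro v hv hvi
        rcases Finset.mem_insert.mp hv with hv1 | hv1
        · subst hv1
          show ((insert e T).filter (fun x => x.1 = e.1)).card = 1
          rw [Finset.filter_insert, if_pos rfl]
          have : outs T e.1 = ∅ := hout0 e.1 heA
          rw [show T.filter (fun x => x.1 = e.1) = outs T e.1 from rfl, this]
          simp
        · rw [outs_insert_ne (fun hc => heA (hc ▸ hv1))]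
          exact hout1 v hv1 hvi
      · intro v hv
        have hv1 : v ∉ A := fun h => hv (Finset.mem_insert_of_mem h)
        have hv2 : e.1 ≠ v := fun h => hv (h ▸ Finset.mem_insert_self e.1 A)
        rw [outs_insert_ne hv2]
        exact hout0 v hv1
      · rw [outs_insert_ne (fun h => heA (h ▸ hiA))]
        exact houti
      · intro v hv
        rcases Finset.mem_insert.mp hv with hv1 | hv1
        · subst hv1
          refine Relation.ReflTransGen.head (show (e.1, e.2) ∈ insert e T from ?_)
            (dReach_mono (Finset.subset_insert e T) (hreach e.2 he2))
          rw [Prod.mk.eta]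
          exact Finset.mem_insert_self e T
        · exact dReach_mono (Finset.subset_insert e T) (hreach v hv1)

lemma exists_tree [Fintype V] {E : Finset (V × V)} (hsc : StronglyConnected E) (i : V) :
    ∃ T, IsSpanningTreeTo E i T := by
  refine partial_tree hsc (Fintype.card V) {i} (Finset.mem_singleton_self i)
    (by omega) ⟨∅, Finset.empty_subset E, ?_, ?_, ?_, ?_⟩
  · intro v hv hvi
    exact absurd (Finset.mem_singleton.mp hv) hvi
  · intro v _
    rfl
  · rfl
  · intro v hv
    rw [Finset.mem_singleton.mp hv]
    exact Relation.ReflTransGen.refl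

open scoped Classical in
noncomputable def trees [Fintype V] (E : Finset (V × V)) (i : V) : Finset (Finset (V × V)) :=
  E.powerset.filter (fun T => IsSpanningTreeTo E i T)

lemma treeConst_eq [Fintype V] (E : Finset (V × V)) (k : V × V → ℝ) (i : V) :
    treeConst E k i = ∑ T ∈ trees E i, ∏ e ∈ T, k e := rfl

lemma mem_trees [Fintype V] {E : Finset (V × V)} {i : V} {T : Finset (V × V)} :
    T ∈ trees E i ↔ IsSpanningTreeTo E i T := by
  classical
  unfold trees
  rw [Finset.filter_congr_decidable, Finset.mem_filter, Finset.mem_powerset]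
  exact ⟨fun h => h.2, fun h => ⟨h.1, h⟩⟩

lemma treeConst_pos [Fintype V] {E : Finset (V × V)} (hsc : StronglyConnected E)
    {k : V × V → ℝ} (hk : ∀ e ∈ E, 0 < k e) (i : V) : 0 < treeConst E k i := by
  rw [treeConst_eq]
  obtain ⟨T, hT⟩ := exists_tree hsc i
  exact Finset.sum_pos
    (fun T' hT' => Finset.prod_pos fun e he => hk e ((mem_trees.mp hT').1 he))
    ⟨T, mem_trees.mpr hT⟩

open scoped Classical in
noncomputable def cycEdge (H : Finset (V × V)) (i : V) : V × V :=
  if h : ∃ e, e ∈ H ∧ e.2 = i ∧ ¬HasDirectedCycle (H.erase e) then h.choose else (i, i)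

lemma cycEdge_spec {H : Finset (V × V)} {i : V}
    (h : ∃ e, e ∈ H ∧ e.2 = i ∧ ¬HasDirectedCycle (H.erase e)) :
    cycEdge H i ∈ H ∧ (cycEdge H i).2 = i ∧ ¬HasDirectedCycle (H.erase (cycEdge H i)) := by
  rw [cycEdge, dif_pos h]
  exact h.choose_spec

lemma outs_eq_singleton {H : Finset (V × V)} {v : V} (h1 : (outs H v).card = 1) :
    outs H v = {(v, nxt H v)} := by
  have hne : (outs H v).Nonempty := Finset.card_pos.mp (by rw [h1]; norm_num)
  obtain ⟨a, ha⟩ := Finset.card_eq_one.mp h1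
  have hmem : (v, nxt H v) ∈ outs H v := Finset.mem_filter.mpr ⟨nxt_mem hne, rfl⟩
  rw [ha] at hmem ⊢
  rw [Finset.mem_singleton] at hmem
  rw [hmem]

lemma insert_edge_functional [Fintype V] {E T : Finset (V × V)} {j : V} {e : V × V}
    (hT : IsSpanningTreeTo E j T) (he1 : e.1 = j) :
    (∀ v, (outs (insert e T) v).card = 1) ∧ e ∉ T := by
  have hroot := root_outs_empty hT
  have heT : e ∉ T := fun h => by
    have : e ∈ outs T j := Finset.mem_filter.mpr ⟨h, he1⟩
    simp [hroot] at this
  refine ⟨fun v => ?_, heT⟩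
  by_cases hv : v = j
  · show ((insert e T).filter (fun x => x.1 = v)).card = 1
    rw [Finset.filter_insert, if_pos (he1.trans hv.symm),
      show T.filter (fun x => x.1 = v) = outs T v from rfl, hv, hroot]
    simp
  · rw [outs_insert_ne (by rw [he1]; exact fun h => hv h.symm)]
    exact hT.2.2 v hv

lemma insert_edge_orbit [Fintype V] {E T : Finset (V × V)} {j i : V} {e : V × V}
    (hT : IsSpanningTreeTo E j T) (he1 : e.1 = j) (he2 : e.2 = i) :
    ∀ v, ∃ s, (nxt (insert e T))^[s] v = i := by
  have h1 := (insert_edge_functional hT he1).1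
  have hagree : ∀ v, v ≠ j → nxt (insert e T) v = nxt T v := fun v hv =>
    nxt_congr (outs_insert_ne (by rw [he1]; exact fun h => hv h.symm))
  have hj : nxt (insert e T) j = i := by
    have hm : (j, i) ∈ insert e T := by
      rw [show (j, i) = e from by rw [← he1, ← he2]]
      exact Finset.mem_insert_self e T
    exact nxt_eq (h1 j).le hm
  intro v
  obtain ⟨t, ht⟩ := tree_orbit hT v
  exact orbit_push hagree hj t v ht

lemma insert_edge_orbit_root [Fintype V] {E T : Finset (V × V)} {i : V} {e : V × V}
    (hT : IsSpanningTreeTo E i T) (he1 : e.1 = i) :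
    ∀ v, ∃ s, (nxt (insert e T))^[s] v = i := fun v => by
  obtain ⟨t, ht⟩ := tree_orbit hT v
  exact orbit_transfer
    (fun u hu => nxt_congr (outs_insert_ne (by rw [he1]; exact fun h => hu h.symm))) t v ht

lemma erase_out_root_acyclic [Fintype V] {H : Finset (V × V)} {i : V}
    (h1 : ∀ v, (outs H v).card = 1) (horb : ∀ v, ∃ s, (nxt H)^[s] v = i) :
    ¬HasDirectedCycle (H.erase (i, nxt H i)) ∧ (i, nxt H i) ∈ H := by
  have hne : ∀ v, (outs H v).Nonempty := fun v => Finset.card_pos.mp (by rw [h1 v]; norm_num)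
  have hmem : (i, nxt H i) ∈ H := nxt_mem (hne i)
  have houts : outs (H.erase (i, nxt H i)) i = ∅ := by
    rw [outs_erase_eq, outs_eq_singleton (h1 i), Finset.erase_singleton]
  have hg1 : ∀ v, (outs (H.erase (i, nxt H i)) v).card ≤ 1 := fun v =>
    le_trans outs_card_le_of_erase (h1 v).le
  have hagree : ∀ v, v ≠ i → nxt (H.erase (i, nxt H i)) v = nxt H v := fun v hv =>
    nxt_congr (outs_erase_ne (fun h => hv h.symm))
  have hreach : ∀ v, dReach (H.erase (i, nxt H i)) v i := fun v => by
    obtain ⟨s, hs⟩ := horb v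
    obtain ⟨s', hs'⟩ := orbit_transfer hagree s v hs
    refine iterate_dReach (fun u hu => ?_) s' v hs'
    rw [outs_erase_ne (fun h => hu h.symm)]
    exact hne u
  exact ⟨no_cycle_of_sink hg1 houts hreach, hmem⟩

/-- The Markov chain tree theorem identity. -/
lemma tree_sum_eq [Fintype V] {E : Finset (V × V)} (hloop : NoSelfLoops E) (k : V × V → ℝ)
    (i : V) :
    ∑ e ∈ E.filter (fun e => e.2 = i), k e * treeConst E k e.1
      = (∑ e ∈ E.filter (fun e => e.1 = i), k e) * treeConst E k i := by
  rw [Finset.sum_mul]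
  simp only [treeConst_eq, Finset.mul_sum]
  rw [Finset.sum_sigma' (E.filter (fun e => e.2 = i)) (fun e => trees E e.1)
      (fun e T => k e * ∏ x ∈ T, k x),
    Finset.sum_sigma' (E.filter (fun e => e.1 = i)) (fun _ => trees E i)
      (fun e T => k e * ∏ x ∈ T, k x)]
  refine Finset.sum_nbij'
    (i := fun p => ⟨(i, nxt p.2 i), (insert p.1 p.2).erase (i, nxt p.2 i)⟩)
    (j := fun p => ⟨cycEdge (insert p.1 p.2) i,
      (insert p.1 p.2).erase (cycEdge (insert p.1 p.2) i)⟩) ?_ ?_ ?_ ?_ ?_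
  · -- maps P into Q
    rintro ⟨e, T⟩ hp
    obtain ⟨hp1, hp2⟩ := Finset.mem_sigma.mp hp
    obtain ⟨heE, he2⟩ := Finset.mem_filter.mp hp1
    have hT : IsSpanningTreeTo E e.1 T := mem_trees.mp hp2
    have hji : e.1 ≠ i := fun h => hloop e heE (h.trans he2.symm)
    have h1 := (insert_edge_functional hT rfl).1
    have hnx : nxt (insert e T) i = nxt T i :=
      nxt_congr (outs_insert_ne hji)
    have horb := insert_edge_orbit hT rfl he2
    obtain ⟨hac, hmem⟩ := erase_out_root_acyclic h1 horb
    rw [hnx] at hac hmem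
    have hsubE : insert e T ⊆ E := Finset.insert_subset heE hT.1
    rw [Finset.mem_sigma]
    dsimp only
    constructor
    · rw [Finset.mem_filter]
      exact ⟨hsubE hmem, rfl⟩
    · exact mem_trees.mpr (tree_of_erase hsubE h1 hac)
  · -- maps Q into P
    rintro ⟨e, T⟩ hp
    obtain ⟨hp1, hp2⟩ := Finset.mem_sigma.mp hp
    obtain ⟨heE, he1⟩ := Finset.mem_filter.mp hp1
    have hT : IsSpanningTreeTo E i T := mem_trees.mp hp2
    have hT' : IsSpanningTreeTo E e.1 T := by rwa [he1]
    have h1 := (insert_edge_functional hT' rfl).1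
    have horb := insert_edge_orbit_root hT he1
    have hspec := erase_spec_exists h1 horb
    obtain ⟨hcH, hc2, hcac⟩ := cycEdge_spec hspec
    have hsubE : insert e T ⊆ E := Finset.insert_subset heE hT.1
    rw [Finset.mem_sigma]
    dsimp only
    constructor
    · rw [Finset.mem_filter]
      exact ⟨hsubE hcH, hc2⟩
    · exact mem_trees.mpr (tree_of_erase hsubE h1 hcac)
  · -- left inverse
    rintro ⟨e, T⟩ hp
    obtain ⟨hp1, hp2⟩ := Finset.mem_sigma.mp hp
    obtain ⟨heE, he2⟩ := Finset.mem_filter.mp hp1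
    have hT : IsSpanningTreeTo E e.1 T := mem_trees.mp hp2
    have hji : e.1 ≠ i := fun h => hloop e heE (h.trans he2.symm)
    obtain ⟨h1, heT⟩ := insert_edge_functional hT rfl
    have hnx : nxt (insert e T) i = nxt T i := nxt_congr (outs_insert_ne hji)
    have horb := insert_edge_orbit hT rfl he2
    obtain ⟨hac, hmem⟩ := erase_out_root_acyclic h1 horb
    rw [hnx] at hac hmem
    dsimp only
    rw [Finset.insert_erase hmem]
    have heac : ¬HasDirectedCycle ((insert e T).erase e) := by
      rw [Finset.erase_insert heT]
      exact hT.2.1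
    have hspec : ∃ c, c ∈ insert e T ∧ c.2 = i ∧ ¬HasDirectedCycle ((insert e T).erase c) :=
      ⟨e, Finset.mem_insert_self e T, he2, heac⟩
    obtain ⟨hcH, hc2, hcac⟩ := cycEdge_spec hspec
    have hceq : cycEdge (insert e T) i = e :=
      erase_spec_unique h1 hcH hc2 hcac (Finset.mem_insert_self e T) he2 heac
    rw [hceq, Finset.erase_insert heT]
  · -- right inverse
    rintro ⟨e, T⟩ hp
    obtain ⟨hp1, hp2⟩ := Finset.mem_sigma.mp hp
    obtain ⟨heE, he1⟩ := Finset.mem_filter.mp hp1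
    have hT : IsSpanningTreeTo E i T := mem_trees.mp hp2
    have hT' : IsSpanningTreeTo E e.1 T := by rwa [he1]
    obtain ⟨h1, heT⟩ := insert_edge_functional hT' rfl
    have horb := insert_edge_orbit_root hT he1
    have hspec := erase_spec_exists h1 horb
    obtain ⟨hcH, hc2, hcac⟩ := cycEdge_spec hspec
    dsimp only
    rw [Finset.insert_erase hcH]
    have hc1 : (cycEdge (insert e T) i).1 ≠ i := fun h => by
      have := hloop _ (Finset.insert_subset heE hT.1 hcH)
      rw [hc2] at this
      exact this h
    have hnx : nxt ((insert e T).erase (cycEdge (insert e T) i)) i = nxt (insert e T) i :=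
      nxt_congr (outs_erase_ne hc1)
    have hnxH : nxt (insert e T) i = e.2 := by
      refine nxt_eq (h1 i).le ?_
      rw [show (i, e.2) = e from by rw [← he1]]
      exact Finset.mem_insert_self e T
    have hfst : (i, nxt ((insert e T).erase (cycEdge (insert e T) i)) i) = e := by
      rw [hnx, hnxH, ← he1]
    rw [hfst, Finset.erase_insert heT]
  · -- weights
    rintro ⟨e, T⟩ hp
    obtain ⟨hp1, hp2⟩ := Finset.mem_sigma.mp hp
    obtain ⟨heE, he2⟩ := Finset.mem_filter.mp hp1
    have hT : IsSpanningTreeTo E e.1 T := mem_trees.mp hp2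
    have hji : e.1 ≠ i := fun h => hloop e heE (h.trans he2.symm)
    obtain ⟨h1, heT⟩ := insert_edge_functional hT rfl
    have hnx : nxt (insert e T) i = nxt T i := nxt_congr (outs_insert_ne hji)
    have horb := insert_edge_orbit hT rfl he2
    obtain ⟨hac, hmem⟩ := erase_out_root_acyclic h1 horb
    rw [hnx] at hmem
    dsimp only
    rw [← Finset.prod_insert heT, ← Finset.mul_prod_erase (insert e T) k hmem]

end Aux


section Main
variable {V : Type*} [Fintype V] [DecidableEq V]

lemma reidx_target {E : Finset (V × V)} (hloop : NoSelfLoops E) (i : V) (g : V × V → ℝ) :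
    ∑ e ∈ E.filter (fun e => e.2 = i), g e = ∑ j : V, if (j, i) ∈ E then g (j, i) else 0 := by
  rw [← Finset.sum_filter]
  refine Finset.sum_nbij' (i := fun e => e.1) (j := fun j => (j, i)) ?_ ?_ ?_ ?_ ?_
  · intro e he
    obtain ⟨heE, he2⟩ := Finset.mem_filter.mp he
    rw [Finset.mem_filter]
    refine ⟨Finset.mem_univ _, ?_⟩
    rwa [show (e.1, i) = e from by rw [← he2]]
  · intro j hj
    rw [Finset.mem_filter]
    exact ⟨(Finset.mem_filter.mp hj).2, rfl⟩
  · intro e he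
    obtain ⟨_, he2⟩ := Finset.mem_filter.mp he
    show (e.1, i) = e
    exact Prod.ext rfl he2.symm
  · intro j _
    rfl
  · intro e he
    obtain ⟨_, he2⟩ := Finset.mem_filter.mp he
    have heq : (e.1, i) = e := Prod.ext rfl he2.symm
    rw [heq]

lemma reidx_source {E : Finset (V × V)} (j : V) (g : V × V → ℝ) :
    ∑ e ∈ E.filter (fun e => e.1 = j), g e = ∑ i : V, if (j, i) ∈ E then g (j, i) else 0 := by
  rw [← Finset.sum_filter]
  refine Finset.sum_nbij' (i := fun e => e.2) (j := fun i => (j, i)) ?_ ?_ ?_ ?_ ?_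
  · intro e he
    obtain ⟨heE, he1⟩ := Finset.mem_filter.mp he
    rw [Finset.mem_filter]
    refine ⟨Finset.mem_univ _, ?_⟩
    rwa [show (j, e.2) = e from by rw [← he1]]
  · intro x hx
    rw [Finset.mem_filter]
    exact ⟨(Finset.mem_filter.mp hx).2, rfl⟩
  · intro e he
    obtain ⟨_, he1⟩ := Finset.mem_filter.mp he
    show (j, e.2) = e
    exact Prod.ext he1.symm rfl
  · intro x _
    rfl
  · intro e he
    obtain ⟨_, he1⟩ := Finset.mem_filter.mp he
    have heq : (j, e.2) = e := Prod.ext he1.symm rfl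
    rw [heq]


end Main

/-- For a strongly connected labeled simple digraph with at least two vertices, the matrix
`M = -A_k diag(K_k)` has positive diagonal entries, nonpositive off-diagonal entries,
zero row and column sums; in particular it is row and column diagonally dominant. -/
theorem neg_laplacian_mul_diag_treeConst
    {V : Type*} [Fintype V] [DecidableEq V]
    (E : Finset (V × V)) (hloop : NoSelfLoops E)
    (k : V × V → ℝ) (hk : ∀ e ∈ E, 0 < k e)
    (hsc : StronglyConnected E) (hcard : 1 < Fintype.card V)
    (M : Matrix V V ℝ)
    (hM : M = -(digraphLaplacian E k * Matrix.diagonal (treeConst E k))) :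
    (∀ i : V, 0 < M i i) ∧
    (∀ i j : V, i ≠ j → M i j ≤ 0) ∧
    (∀ i : V, ∑ j : V, M i j = 0) ∧
    (∀ j : V, ∑ i : V, M i j = 0) ∧
    (∀ i : V, ∑ j ∈ Finset.univ.erase i, |M i j| ≤ |M i i|) ∧
    (∀ j : V, ∑ i ∈ Finset.univ.erase j, |M i j| ≤ |M j j|) := by
  classical
  set K := treeConst E k with hKdef
  have hKpos : ∀ i, 0 < K i := treeConst_pos hsc hk
  have hM' : ∀ i j, M i j = -(digraphLaplacian E k i j * K j) := by
    intro i j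
    rw [hM]
    rw [Matrix.neg_apply, Matrix.mul_diagonal]
  have hSpos : ∀ i, 0 < ∑ e ∈ E.filter (fun e => e.1 = i), k e := by
    intro i
    obtain ⟨j, hj⟩ := Fintype.exists_ne_of_one_lt_card hcard i
    rcases Relation.ReflTransGen.cases_head (hsc i j) with heq | ⟨c, hc, -⟩
    · exact absurd heq.symm hj
    · exact Finset.sum_pos (fun e he => hk e (Finset.mem_filter.mp he).1)
        ⟨(i, c), Finset.mem_filter.mpr ⟨hc, rfl⟩⟩
  have hLdiag : ∀ i, digraphLaplacian E k i i = -(∑ e ∈ E.filter (fun e => e.1 = i), k e) := by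
    intro i
    simp [digraphLaplacian]
  have hLoff : ∀ i j, i ≠ j → digraphLaplacian E k i j = if (j, i) ∈ E then k (j, i) else 0 := by
    intro i j h
    simp [digraphLaplacian, h]
  have hdiagpos : ∀ i, 0 < M i i := fun i => by
    rw [hM' i i, hLdiag, neg_mul, neg_neg]
    exact mul_pos (hSpos i) (hKpos i)
  have hoff : ∀ i j, i ≠ j → M i j ≤ 0 := fun i j hij => by
    rw [hM' i j, hLoff i j hij]
    by_cases hE : (j, i) ∈ E
    · rw [if_pos hE]
      exact neg_nonpos.mpr (le_of_lt (mul_pos (hk _ hE) (hKpos j)))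
    · rw [if_neg hE, zero_mul, neg_zero]
  have hrow : ∀ i, ∑ j : V, M i j = 0 := by
    intro i
    have hsplit : ∀ j : V, M i j =
        -((if j = i then -(∑ e ∈ E.filter (fun e => e.1 = i), k e) * K i else 0) +
          (if (j, i) ∈ E then k (j, i) * K j else 0)) := by
      intro j
      rw [hM' i j]
      by_cases hji : j = i
      · subst hji
        rw [hLdiag]
        have hnE : (j, j) ∉ E := fun h => hloop _ h rfl
        rw [if_pos rfl, if_neg hnE, add_zero]
      · rw [hLoff i j (fun h => hji h.symm), if_neg hji, zero_add]
        by_cases hE : (j, i) ∈ E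
        · rw [if_pos hE, if_pos hE]
        · rw [if_neg hE, if_neg hE, zero_mul]
    rw [Finset.sum_congr rfl fun j _ => hsplit j]
    rw [Finset.sum_neg_distrib, Finset.sum_add_distrib]
    rw [Finset.sum_ite_eq' Finset.univ i
      (fun _ => -(∑ e ∈ E.filter (fun e => e.1 = i), k e) * K i), if_pos (Finset.mem_univ i)]
    have h2 : ∑ j : V, (if (j, i) ∈ E then k (j, i) * K j else 0)
        = (∑ e ∈ E.filter (fun e => e.1 = i), k e) * K i := by
      rw [← reidx_target hloop i (fun e => k e * K e.1)]
      exact tree_sum_eq hloop k i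
    rw [h2]
    ring
  have hcol : ∀ j, ∑ i : V, M i j = 0 := by
    intro j
    have hLcol : ∑ i : V, digraphLaplacian E k i j = 0 := by
      have hsplit : ∀ i : V, digraphLaplacian E k i j =
          (if i = j then -(∑ e ∈ E.filter (fun e => e.1 = j), k e) else 0) +
            (if (j, i) ∈ E then k (j, i) else 0) := by
        intro i
        by_cases hij : i = j
        · subst hij
          rw [hLdiag]
          have hnE : (i, i) ∉ E := fun h => hloop _ h rfl
          rw [if_pos rfl, if_neg hnE, add_zero]
        · rw [hLoff i j hij, if_neg hij, zero_add]
      rw [Finset.sum_congr rfl fun i _ => hsplit i, Finset.sum_add_distrib]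
      rw [Finset.sum_ite_eq' Finset.univ j
        (fun _ => -(∑ e ∈ E.filter (fun e => e.1 = j), k e)), if_pos (Finset.mem_univ j)]
      rw [← reidx_source j k]
      ring
    calc ∑ i : V, M i j = ∑ i : V, -(digraphLaplacian E k i j * K j) :=
          Finset.sum_congr rfl fun i _ => hM' i j
      _ = -((∑ i : V, digraphLaplacian E k i j) * K j) := by
          rw [Finset.sum_neg_distrib, Finset.sum_mul]
      _ = 0 := by rw [hLcol, zero_mul, neg_zero]
  refine ⟨hdiagpos, hoff, hrow, hcol, ?_, ?_⟩
  · intro i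
    have h1 : ∀ j ∈ Finset.univ.erase i, |M i j| = -M i j := fun j hj =>
      abs_of_nonpos (hoff i j fun h => (Finset.mem_erase.mp hj).1 h.symm)
    rw [Finset.sum_congr rfl h1, Finset.sum_neg_distrib]
    have h2 := hrow i
    rw [← Finset.add_sum_erase _ _ (Finset.mem_univ i)] at h2
    rw [abs_of_pos (hdiagpos i)]
    linarith
  · intro j
    have h1 : ∀ i ∈ Finset.univ.erase j, |M i j| = -M i j := fun i hi =>
      abs_of_nonpos (hoff i j (Finset.mem_erase.mp hi).1)
    rw [Finset.sum_congr rfl h1, Finset.sum_neg_distrib]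
    have h2 := hcol j
    rw [← Finset.add_sum_erase _ _ (Finset.mem_univ j)] at h2
    rw [abs_of_pos (hdiagpos j)]
    linarith
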